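/- Let S and A be nonempty finite sets, let m ≥ 1, let W^1,…,W^m ⊆ Δ(S) be nonempty compact sets, and for each s ∈ S let U^s ⊆ Δ({1,…,m})^A be a nonempty compact set. Define 𝒫 = {(∑_{i=1}^m u^i_{sa} w^i)_{(s,a)∈S×A} : w^i ∈ W^i for each i = 1,…,m, and (u^i_{sa})_{i∈{1,…,m},a∈A} ∈ U^s for each s ∈ S}. Then 𝒫 satisfies the weak SSP. -/

import Mathlib

open scoped BigOperators

namespace RMDP

variable {S A : Type*} [Fintype S] [Fintype A]

def IsKernel (P : S → A → S → ℝ) : Prop := ∀ s a, P s a ∈ stdSimplex ℝ S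

def IsPolicy (π : S → A → ℝ) : Prop := ∀ s, π s ∈ stdSimplex ℝ A

def NextStateIndep (r : S → A → S → ℝ) : Prop :=
  ∀ (s : S) (a : A) (s' s'' : S), r s a s' = r s a s''

noncomputable def minOver {K : Type*} (K0 : Set K) (f : K → ℝ) : ℝ := sInf (f '' K0)

noncomputable def maxOver {K : Type*} (K0 : Set K) (f : K → ℝ) : ℝ := sSup (f '' K0)

noncomputable def TpiP (π : S → A → ℝ) (r : S → A → S → ℝ) (γ : ℝ)
    (P : S → A → S → ℝ) (v : S → ℝ) : S → ℝ :=
  fun s => ∑ a, π s a * ∑ s', P s a s' * (r s a s' + γ * v s')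

noncomputable def Tpi (US : Set (S → A → S → ℝ)) (π : S → A → ℝ)
    (r : S → A → S → ℝ) (γ : ℝ) (v : S → ℝ) : S → ℝ :=
  fun s => minOver US (fun P => ∑ a, π s a * ∑ s', P s a s' * (r s a s' + γ * v s'))

noncomputable def TpiHat (US : Set (S → A → S → ℝ)) (π : S → A → ℝ)
    (r : S → A → S → ℝ) (γ : ℝ) (v : S → ℝ) : S → ℝ :=
  fun s => ∑ a, π s a * minOver US (fun P => ∑ s', P s a s' * (r s a s' + γ * v s'))

noncomputable def Topt (US : Set (S → A → S → ℝ)) (r : S → A → S → ℝ) (γ : ℝ)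
    (v : S → ℝ) : S → ℝ :=
  fun s => maxOver (stdSimplex ℝ A)
    (fun p => minOver US (fun P => ∑ a, p a * ∑ s', P s a s' * (r s a s' + γ * v s')))

def IsHPolicy (π : List (S × A) → S → A → ℝ) : Prop := ∀ h s, π h s ∈ stdSimplex ℝ A

noncomputable def expRHH (π : List (S × A) → S → A → ℝ)
    (Q : List (S × A) → S → A → S → ℝ) (r : S → A → S → ℝ) :
    ℕ → List (S × A) → S → ℝ
  | 0, h, s => ∑ a, π h s a * ∑ s', Q (h ++ [(s, a)]) s a s' * r s a s'
  | (t + 1), h, s =>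
      ∑ a, π h s a * ∑ s', Q (h ++ [(s, a)]) s a s' * expRHH π Q r t (h ++ [(s, a)]) s'

noncomputable def vHH (π : List (S × A) → S → A → ℝ)
    (Q : List (S × A) → S → A → S → ℝ) (r : S → A → S → ℝ) (γ : ℝ) (s : S) : ℝ :=
  ∑' t : ℕ, γ ^ t * expRHH π Q r t [] s

def STractable (US : Set (S → A → S → ℝ)) : Prop :=
  ∀ π : S → A → ℝ, IsPolicy π →
    ∀ (r : S → A → S → ℝ) (γ : ℝ), 0 ≤ γ → γ < 1 →
      ∀ v : (S → A → S → ℝ) → S → ℝ, (∀ P ∈ US, TpiP π r γ P (v P) = v P) →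
        ∀ u : S → ℝ, Tpi US π r γ u = u →
          ∀ μ ∈ stdSimplex ℝ S,
            minOver US (fun P => ∑ s, μ s * v P s) = ∑ s, μ s * u s

def SATractable (US : Set (S → A → S → ℝ)) : Prop :=
  ∀ π : S → A → ℝ, IsPolicy π →
    ∀ (r : S → A → S → ℝ) (γ : ℝ), 0 ≤ γ → γ < 1 →
      ∀ v : (S → A → S → ℝ) → S → ℝ, (∀ P ∈ US, TpiP π r γ P (v P) = v P) →
        ∀ uhat : S → ℝ, TpiHat US π r γ uhat = uhat →
          ∀ μ ∈ stdSimplex ℝ S,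
            minOver US (fun P => ∑ s, μ s * v P s) = ∑ s, μ s * uhat s

def WeakSTractable (US : Set (S → A → S → ℝ)) : Prop :=
  ∀ π : S → A → ℝ, IsPolicy π →
    ∀ (r : S → A → S → ℝ), NextStateIndep r → ∀ γ : ℝ, 0 ≤ γ → γ < 1 →
      ∀ v : (S → A → S → ℝ) → S → ℝ, (∀ P ∈ US, TpiP π r γ P (v P) = v P) →
        ∀ u : S → ℝ, Tpi US π r γ u = u →
          ∀ μ ∈ stdSimplex ℝ S,
            minOver US (fun P => ∑ s, μ s * v P s) = ∑ s, μ s * u s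

def WeakSATractable (US : Set (S → A → S → ℝ)) : Prop :=
  ∀ π : S → A → ℝ, IsPolicy π →
    ∀ (r : S → A → S → ℝ), NextStateIndep r → ∀ γ : ℝ, 0 ≤ γ → γ < 1 →
      ∀ v : (S → A → S → ℝ) → S → ℝ, (∀ P ∈ US, TpiP π r γ P (v P) = v P) →
        ∀ uhat : S → ℝ, TpiHat US π r γ uhat = uhat →
          ∀ μ ∈ stdSimplex ℝ S,
            minOver US (fun P => ∑ s, μ s * v P s) = ∑ s, μ s * uhat s

def SSPs (US : Set (S → A → S → ℝ)) : Prop :=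
  ∀ V : S → A → S → ℝ, ∃ Pstar ∈ US, ∀ s : S, ∀ P ∈ US,
    (∑ a, ∑ s', Pstar s a s' * V s a s') ≤ ∑ a, ∑ s', P s a s' * V s a s'

def SSPsa (US : Set (S → A → S → ℝ)) : Prop :=
  ∀ V : S → A → S → ℝ, ∃ Pstar ∈ US, ∀ (s : S) (a : A), ∀ P ∈ US,
    (∑ s', Pstar s a s' * V s a s') ≤ ∑ s', P s a s' * V s a s'

def WeakSSPs (US : Set (S → A → S → ℝ)) : Prop :=
  ∀ π : S → A → ℝ, IsPolicy π → ∀ V : S → ℝ, ∃ Pstar ∈ US, ∀ s : S, ∀ P ∈ US,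
    (∑ a, π s a * ∑ s', Pstar s a s' * V s') ≤ ∑ a, π s a * ∑ s', P s a s' * V s'

def WeakSSPsa (US : Set (S → A → S → ℝ)) : Prop :=
  ∀ V : S → ℝ, ∃ Pstar ∈ US, ∀ (s : S) (a : A), ∀ P ∈ US,
    (∑ s', Pstar s a s' * V s') ≤ ∑ s', P s a s' * V s'


theorem stmt15 {S A : Type*} [Fintype S] [Fintype A] [Nonempty S] [Nonempty A]
    (m : ℕ) (hm : 1 ≤ m)
    (W : Fin m → Set (S → ℝ))
    (hW : ∀ i, (W i).Nonempty ∧ IsCompact (W i) ∧ W i ⊆ stdSimplex ℝ S)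
    (U : S → Set (A → Fin m → ℝ))
    (hU : ∀ s : S, (U s).Nonempty ∧ IsCompact (U s) ∧
      ∀ q ∈ U s, ∀ a : A, q a ∈ stdSimplex ℝ (Fin m))
    (US : Set (S → A → S → ℝ))
    (hUS : US = {P : S → A → S → ℝ |
      ∃ (w : Fin m → S → ℝ) (uc : S → A → Fin m → ℝ),
        (∀ i, w i ∈ W i) ∧ (∀ s : S, uc s ∈ U s) ∧
        ∀ (s : S) (a : A), P s a = fun s' => ∑ i, uc s a i * w i s'}) :
    WeakSSPs US := by
  intro π hπ V
  have h1 : ∀ i, ∃ w0 ∈ W i, ∀ w ∈ W i,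
      (∑ s', w0 s' * V s') ≤ ∑ s', w s' * V s' := by
    intro i
    obtain ⟨ne, cpt, _⟩ := hW i
    have hc : Continuous fun w : S → ℝ => ∑ s', w s' * V s' := by
      apply continuous_finset_sum
      exact fun s' _ => (continuous_apply s').mul continuous_const
    obtain ⟨w0, hw0, hmin⟩ := cpt.exists_isMinOn ne hc.continuousOn
    exact ⟨w0, hw0, fun w hw => hmin hw⟩
  choose wstar hwW hwmin using h1
  set c : Fin m → ℝ := fun i => ∑ s', wstar i s' * V s' with hc
  have h2 : ∀ s : S, ∃ u0 ∈ U s, ∀ u ∈ U s,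
      (∑ a, π s a * ∑ i, u0 a i * c i) ≤ ∑ a, π s a * ∑ i, u a i * c i := by
    intro s
    obtain ⟨ne, cpt, _⟩ := hU s
    have hcont : Continuous fun u : A → Fin m → ℝ =>
        ∑ a, π s a * ∑ i, u a i * c i := by
      apply continuous_finset_sum
      intro a _
      exact continuous_const.mul (continuous_finset_sum _
        (fun i _ => (continuous_apply_apply a i).mul continuous_const))
    obtain ⟨u0, hu0, hmin⟩ := cpt.exists_isMinOn ne hcont.continuousOn
    exact ⟨u0, hu0, fun u hu => hmin hu⟩
  choose ustar huU humin using h2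
  refine ⟨fun s a s' => ∑ i, ustar s a i * wstar i s', ?_, ?_⟩
  · rw [hUS]
    exact ⟨wstar, ustar, hwW, huU, fun s a => rfl⟩
  · intro s P hP
    rw [hUS] at hP
    obtain ⟨w, uc, hw, hu, hPeq⟩ := hP
    have key : ∀ (u : A → Fin m → ℝ) (wf : Fin m → S → ℝ),
        (∑ a, π s a * ∑ s', (∑ i, u a i * wf i s') * V s')
          = ∑ a, π s a * ∑ i, u a i * ∑ s', wf i s' * V s' := by
      intro u wf
      refine Finset.sum_congr rfl fun a _ => ?_
      congr 1
      simp_rw [Finset.sum_mul]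
      rw [Finset.sum_comm]
      refine Finset.sum_congr rfl fun i _ => ?_
      rw [Finset.mul_sum]
      refine Finset.sum_congr rfl fun s' _ => ?_
      ring
    have hL : (∑ a, π s a * ∑ s', (∑ i, ustar s a i * wstar i s') * V s')
        = ∑ a, π s a * ∑ i, ustar s a i * c i := key (ustar s) wstar
    have hR : (∑ a, π s a * ∑ s', P s a s' * V s')
        = ∑ a, π s a * ∑ i, uc s a i * ∑ s', w i s' * V s' := by
      rw [← key (uc s) w]
      refine Finset.sum_congr rfl fun a _ => ?_
      rw [hPeq s a]
    rw [hL, hR]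
    calc (∑ a, π s a * ∑ i, ustar s a i * c i)
        ≤ ∑ a, π s a * ∑ i, uc s a i * c i := humin s (uc s) (hu s)
      _ ≤ ∑ a, π s a * ∑ i, uc s a i * ∑ s', w i s' * V s' := by
          refine Finset.sum_le_sum fun a _ => ?_
          refine mul_le_mul_of_nonneg_left ?_ ((hπ s).1 a)
          refine Finset.sum_le_sum fun i _ => ?_
          refine mul_le_mul_of_nonneg_left ?_ (((hU s).2.2 (uc s) (hu s) a).1 i)
          exact hwmin i (w i) (hw i)

end RMDP
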